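/- Fix 0 < n < 1 and let N, d → ∞ with N/(d+1) = n fixed (along a sequence where this is possible). With a = (N/d)(d−N+1) and b = ((N−1)/d)(d−N+2), the largest eigenvalue λ₊ of the matrix (1/2)[[1, √a],[√a, a+b]] satisfies λ₊ / N → 1 − n, and the smaller eigenvalue λ₋ satisfies λ₋ → 1/4. -/

import Mathlib

open Matrix Filter

lemma spec2 (p q r x : ℝ) : x ∈ spectrum ℝ (!![p, q; q, r]) ↔ (x - p) * (x - r) - q ^ 2 = 0 := by
  rw [spectrum.mem_iff]
  rw [Matrix.isUnit_iff_isUnit_det]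
  rw [isUnit_iff_ne_zero, not_not, Matrix.det_fin_two]
  simp [Matrix.algebraMap_matrix_apply]
  constructor <;> intro h <;> nlinarith [h]

lemma keyfac (A B x : ℝ) (hA : 0 ≤ A) :
    (x - 1/2) * (x - (A+B)/2) - A/4 =
      (x - ((1+A+B)/2 + Real.sqrt (((1-A-B)/2)^2 + A))/2) *
      (x - ((1+A+B)/2 - Real.sqrt (((1-A-B)/2)^2 + A))/2) := by
  have h : Real.sqrt (((1-A-B)/2)^2 + A) ^ 2 = ((1-A-B)/2)^2 + A :=
    Real.sq_sqrt (add_nonneg (sq_nonneg _) hA)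
  linear_combination h/4

theorem stmt10 (n : ℝ) (hn0 : 0 < n) (hn1 : n < 1)
    (Nseq dseq : ℕ → ℕ) (hNpos : ∀ j, 0 < Nseq j)
    (hdtop : Tendsto (fun j => (dseq j : ℝ)) atTop atTop)
    (hfix : ∀ j, (Nseq j : ℝ) / ((dseq j : ℝ) + 1) = n)
    (a b : ℕ → ℝ)
    (ha : ∀ j, a j = ((Nseq j : ℝ) / dseq j) * ((dseq j : ℝ) - Nseq j + 1))
    (hb : ∀ j, b j = (((Nseq j : ℝ) - 1) / dseq j) * ((dseq j : ℝ) - Nseq j + 2))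
    (M : ℕ → Matrix (Fin 2) (Fin 2) ℝ)
    (hM : ∀ j, M j = (1 / 2 : ℝ) • !![1, Real.sqrt (a j); Real.sqrt (a j), a j + b j])
    (lp lm : ℕ → ℝ)
    (hlp : ∀ j, lp j ∈ spectrum ℝ (M j) ∧ ∀ μ ∈ spectrum ℝ (M j), μ ≤ lp j)
    (hlm : ∀ j, lm j ∈ spectrum ℝ (M j) ∧ ∀ μ ∈ spectrum ℝ (M j), lm j ≤ μ) :
    Tendsto (fun j => lp j / (Nseq j : ℝ)) atTop (nhds (1 - n)) ∧
    Tendsto (fun j => lm j) atTop (nhds (1 / 4)) := by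
  have hcpos : 0 < n * (1 - n) := by nlinarith
  -- basic facts
  have hNge1 : ∀ j, (1:ℝ) ≤ (Nseq j : ℝ) := fun j => by
    exact_mod_cast Nat.one_le_cast.mpr (hNpos j)
  have hNr : ∀ j, (Nseq j : ℝ) = n * ((dseq j : ℝ) + 1) := by
    intro j
    have h := hfix j
    have hpos : (0:ℝ) < (dseq j : ℝ) + 1 := by positivity
    field_simp at h
    linarith
  have hd1 : ∀ j, (1:ℝ) ≤ (dseq j : ℝ) := by
    intro j
    rcases Nat.eq_zero_or_pos (dseq j) with h0 | h0
    · exfalso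
      have := hNr j
      rw [h0] at this
      simp at this
      nlinarith [hNge1 j]
    · exact_mod_cast Nat.one_le_cast.mpr h0
  have hdne : ∀ j, (dseq j : ℝ) ≠ 0 := fun j => by linarith [hd1 j]
  have haeq : ∀ j, a j = n * (1 - n) * ((dseq j : ℝ) + 1)^2 / dseq j := by
    intro j
    rw [ha j, hNr j]
    field_simp
    ring
  have ha0 : ∀ j, 0 ≤ a j := by
    intro j
    rw [haeq j]
    apply div_nonneg _ (by linarith [hd1 j])
    positivity
  have hb0 : ∀ j, 0 ≤ b j := by
    intro j
    rw [hb j]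
    apply mul_nonneg (div_nonneg (by linarith [hNge1 j]) (by linarith [hd1 j]))
    nlinarith [hNr j, hd1 j]
  -- matrix as explicit symmetric matrix
  have hMeq : ∀ j, M j = !![1/2, Real.sqrt (a j)/2; Real.sqrt (a j)/2, (a j + b j)/2] := by
    intro j
    rw [hM j]
    ext i k
    fin_cases i <;> fin_cases k <;> simp <;> ring
  have hq2 : ∀ j, (Real.sqrt (a j)/2)^2 = a j / 4 := by
    intro j
    rw [div_pow, Real.sq_sqrt (ha0 j)]
    norm_num
  have hspec : ∀ j x, x ∈ spectrum ℝ (M j) ↔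
      (x - 1/2) * (x - (a j + b j)/2) - a j/4 = 0 := by
    intro j x
    rw [hMeq j, spec2, hq2 j]
  have hmem : ∀ j x, x ∈ spectrum ℝ (M j) ↔
      x = ((1 + a j + b j)/2 + Real.sqrt (((1 - a j - b j)/2)^2 + a j))/2 ∨
      x = ((1 + a j + b j)/2 - Real.sqrt (((1 - a j - b j)/2)^2 + a j))/2 := by
    intro j x
    rw [hspec j x, keyfac (a j) (b j) x (ha0 j), mul_eq_zero, sub_eq_zero, sub_eq_zero]
  have hsn : ∀ j, 0 ≤ Real.sqrt (((1 - a j - b j)/2)^2 + a j) := fun j => Real.sqrt_nonneg _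
  -- identify lp and lm
  have hlpe : ∀ j, lp j = ((1 + a j + b j)/2 + Real.sqrt (((1 - a j - b j)/2)^2 + a j))/2 := by
    intro j
    obtain ⟨hm, hmax⟩ := hlp j
    have hrp := hmax _ ((hmem j _).mpr (Or.inl rfl))
    rcases (hmem j _).mp hm with h | h
    · exact h
    · linarith [hsn j]
  have hlme : ∀ j, lm j = ((1 + a j + b j)/2 - Real.sqrt (((1 - a j - b j)/2)^2 + a j))/2 := by
    intro j
    obtain ⟨hm, hmin⟩ := hlm j
    have hrm := hmin _ ((hmem j _).mpr (Or.inr rfl))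
    rcases (hmem j _).mp hm with h | h
    · linarith [hsn j]
    · exact h
  have hlppos : ∀ j, 0 < lp j := by
    intro j
    rw [hlpe j]
    have := ha0 j; have := hb0 j; have := hsn j
    linarith
  have hprod : ∀ j, lp j * lm j = b j / 4 := by
    intro j
    rw [hlpe j, hlme j]
    have h : Real.sqrt (((1 - a j - b j)/2)^2 + a j) ^ 2 = ((1 - a j - b j)/2)^2 + a j :=
      Real.sq_sqrt (add_nonneg (sq_nonneg _) (ha0 j))
    linear_combination -h/4
  -- scaled quantities
  have hu : Tendsto (fun j => ((dseq j : ℝ))⁻¹) atTop (nhds 0) :=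
    hdtop.inv_tendsto_atTop
  have hA : Tendsto (fun j => a j / dseq j) atTop (nhds (n * (1 - n))) := by
    have heq : ∀ j, a j / dseq j = n * (1 - n) * (1 + ((dseq j : ℝ))⁻¹)^2 := by
      intro j
      have hd := hdne j
      rw [haeq j]
      field_simp
    have h : Tendsto (fun j => n * (1 - n) * (1 + ((dseq j : ℝ))⁻¹)^2) atTop
        (nhds (n * (1 - n) * (1 + 0)^2)) :=
      tendsto_const_nhds.mul ((tendsto_const_nhds.add hu).pow 2)
    have h' := h.congr (fun j => (heq j).symm)
    simpa using h'
  have hB : Tendsto (fun j => b j / dseq j) atTop (nhds (n * (1 - n))) := by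
    have heq : ∀ j, b j / dseq j =
        (n * (1 + ((dseq j : ℝ))⁻¹) - ((dseq j : ℝ))⁻¹) *
        ((1 - n) * (1 + ((dseq j : ℝ))⁻¹) + ((dseq j : ℝ))⁻¹) := by
      intro j
      have hd := hdne j
      rw [hb j, hNr j]
      field_simp
      ring_nf
      try tauto
    have h : Tendsto _ atTop (nhds ((n * (1 + 0) - 0) * ((1 - n) * (1 + 0) + 0))) :=
      ((tendsto_const_nhds.mul (tendsto_const_nhds.add hu)).sub hu).mul
        ((tendsto_const_nhds.mul (tendsto_const_nhds.add hu)).add hu)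
    have h' := h.congr (fun j => (heq j).symm)
    simpa using h'
  -- limit of lp / d
  have hlpd : ∀ j, lp j / dseq j =
      ((((dseq j : ℝ))⁻¹ + a j / dseq j + b j / dseq j)/2 +
        Real.sqrt (((((dseq j : ℝ))⁻¹ - a j / dseq j - b j / dseq j)/2)^2 +
          (a j / dseq j) * ((dseq j : ℝ))⁻¹))/2 := by
    intro j
    have hd0 : (0:ℝ) < (dseq j : ℝ) := by linarith [hd1 j]
    have hsr : Real.sqrt (((1 - a j - b j)/2)^2 + a j) / dseq j =
        Real.sqrt (((((dseq j : ℝ))⁻¹ - a j / dseq j - b j / dseq j)/2)^2 +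
          (a j / dseq j) * ((dseq j : ℝ))⁻¹) := by
      rw [show ((((dseq j : ℝ))⁻¹ - a j / dseq j - b j / dseq j)/2)^2 +
          (a j / dseq j) * ((dseq j : ℝ))⁻¹ =
          ((((1 - a j - b j)/2)^2 + a j)) / ((dseq j : ℝ))^2 by field_simp]
      rw [Real.sqrt_div (add_nonneg (sq_nonneg _) (ha0 j)), Real.sqrt_sq hd0.le]
    rw [hlpe j, ← hsr]
    field_simp
  have hlpdlim : Tendsto (fun j => lp j / dseq j) atTop (nhds (n * (1 - n))) := by
    have hin : Tendsto (fun j => (((((dseq j : ℝ))⁻¹ - a j / dseq j - b j / dseq j)/2)^2 +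
        (a j / dseq j) * ((dseq j : ℝ))⁻¹)) atTop
        (nhds (((0 - n * (1 - n) - n * (1 - n))/2)^2 + (n * (1 - n)) * 0)) :=
      ((((hu.sub hA).sub hB).div_const 2).pow 2).add (hA.mul hu)
    have hsq : Tendsto (fun j => Real.sqrt ((((((dseq j : ℝ))⁻¹ - a j / dseq j - b j / dseq j)/2)^2 +
        (a j / dseq j) * ((dseq j : ℝ))⁻¹))) atTop (nhds (n * (1 - n))) := by
      have h := (Real.continuous_sqrt.tendsto _).comp hin
      have hv : Real.sqrt (((0 - n * (1 - n) - n * (1 - n))/2)^2 + (n * (1 - n)) * 0) = n * (1 - n) := by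
        rw [show ((0 - n * (1 - n) - n * (1 - n))/2)^2 + (n * (1 - n)) * 0 = (n * (1 - n))^2 by ring]
        exact Real.sqrt_sq hcpos.le
      rwa [hv] at h
    have h : Tendsto (fun j => ((((dseq j : ℝ))⁻¹ + a j / dseq j + b j / dseq j)/2 +
        Real.sqrt (((((dseq j : ℝ))⁻¹ - a j / dseq j - b j / dseq j)/2)^2 +
          (a j / dseq j) * ((dseq j : ℝ))⁻¹))/2) atTop
        (nhds (((0 + n * (1 - n) + n * (1 - n))/2 + n * (1 - n))/2)) :=
      ((((hu.add hA).add hB).div_const 2).add hsq).div_const 2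
    have h' := h.congr (fun j => (hlpd j).symm)
    have hv : ((0 + n * (1 - n) + n * (1 - n))/2 + n * (1 - n))/2 = n * (1 - n) := by ring
    rwa [hv] at h'
  -- first limit
  have hNd : Tendsto (fun j => (Nseq j : ℝ) / dseq j) atTop (nhds n) := by
    have heq : ∀ j, (Nseq j : ℝ) / dseq j = n * (1 + ((dseq j : ℝ))⁻¹) := by
      intro j
      have hd := hdne j
      rw [hNr j]
      field_simp
    have h : Tendsto (fun j => n * (1 + ((dseq j : ℝ))⁻¹)) atTop (nhds (n * (1 + 0))) :=
      tendsto_const_nhds.mul (tendsto_const_nhds.add hu)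
    have h' := h.congr (fun j => (heq j).symm)
    simpa using h'
  constructor
  · have heq : ∀ j, lp j / (Nseq j : ℝ) = (lp j / dseq j) / ((Nseq j : ℝ) / dseq j) := by
      intro j
      rw [div_div_div_cancel_right₀]
      exact hdne j
    have h := hlpdlim.div hNd (ne_of_gt hn0)
    have h' := h.congr (fun j => (heq j).symm)
    have hv : n * (1 - n) / n = 1 - n := by field_simp
    rwa [hv] at h'
  · have heq : ∀ j, lm j = ((b j / dseq j) / 4) / (lp j / dseq j) := by
      intro j
      rw [div_right_comm, div_div_div_cancel_right₀, div_right_comm,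
        eq_div_iff (hlppos j).ne']
      · linarith [hprod j]
      · exact hdne j
    have h := (hB.div_const 4).div hlpdlim (ne_of_gt hcpos)
    have h' := h.congr (fun j => (heq j).symm)
    have hv : n * (1 - n) / 4 / (n * (1 - n)) = 1 / 4 := by
      rw [div_div, div_eq_iff (mul_pos (by norm_num) hcpos).ne']
      ring
    rwa [hv] at h'
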